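/- For every integer a, in the group Π(a, −1, −1, 1) the subgroup H generated by the images of s₁², s₂ and s₃ is a normal subgroup of index 2, and H is isomorphic to Π(2a, 1, 1, 1). In particular, Π(a, −1, −1, 1) contains a nilpotent subgroup of index 2, hence is virtually nilpotent. -/

import Mathlib

/-- The relator set of the presentation
`⟨s₁, s₂, s₃ ∣ s₁s₂s₁⁻¹ = s₃^a s₂^ε, s₁s₃s₁⁻¹ = s₃^{ε₁}, s₂s₃s₂⁻¹ = s₃^{ε₂}⟩`. -/
def PiRels (a ε ε₁ ε₂ : ℤ) : Set (FreeGroup (Fin 3)) :=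
  { FreeGroup.of 0 * FreeGroup.of 1 * (FreeGroup.of 0)⁻¹ * FreeGroup.of 1 ^ (-ε) *
      FreeGroup.of 2 ^ (-a),
    FreeGroup.of 0 * FreeGroup.of 2 * (FreeGroup.of 0)⁻¹ * FreeGroup.of 2 ^ (-ε₁),
    FreeGroup.of 1 * FreeGroup.of 2 * (FreeGroup.of 1)⁻¹ * FreeGroup.of 2 ^ (-ε₂) }

/-- The group `Π(a, ε, ε₁, ε₂)` with presentation
`⟨s₁, s₂, s₃ ∣ s₁s₂s₁⁻¹ = s₃^a s₂^ε, s₁s₃s₁⁻¹ = s₃^{ε₁}, s₂s₃s₂⁻¹ = s₃^{ε₂}⟩`. -/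
abbrev PiGroup (a ε ε₁ ε₂ : ℤ) : Type := PresentedGroup (PiRels a ε ε₁ ε₂)
/-- The subgroup `H = ⟨s₁², s₂, s₃⟩` of `Π(a, −1, −1, 1)`. -/
def Hsub (a : ℤ) : Subgroup (PiGroup a (-1) (-1) 1) :=
  Subgroup.closure
    {(PresentedGroup.of 0 : PiGroup a (-1) (-1) 1) ^ 2,
     (PresentedGroup.of 1 : PiGroup a (-1) (-1) 1),
     (PresentedGroup.of 2 : PiGroup a (-1) (-1) 1)}

namespace PiVN

/-! ### Generalities -/

lemma zpow_of_add_hom {G : Type*} [Group G] (v : ℤ → G)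
    (hv : ∀ m n : ℤ, v (m + n) = v m * v n) (n : ℤ) : v 1 ^ n = v n := by
  have h0 : v 0 = 1 := by
    have h := hv 0 0
    rw [add_zero] at h
    exact left_eq_mul.mp h
  induction n using Int.induction_on with
  | zero => simpa using h0.symm
  | succ k ih => rw [zpow_add_one, ih, ← hv]
  | pred k ih =>
      rw [show -(k:ℤ) - 1 = -k + -1 from by ring, hv, ← ih, zpow_add]
      congr 1
      rw [show v (-1) = (v 1)⁻¹ from ?_, zpow_neg_one]
      rw [eq_inv_iff_mul_eq_one, ← hv]
      simpa using h0

lemma relator_eq_one {α : Type*} {rels : Set (FreeGroup α)} {r : FreeGroup α} (h : r ∈ rels) :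
    PresentedGroup.mk rels r = 1 :=
  (QuotientGroup.eq_one_iff _).mpr (Subgroup.subset_normalClosure h)

def e (n : ℤ) : ℤ := if Even n then 1 else -1

lemma e_add (m n : ℤ) : e (m + n) = e m * e n := by
  unfold e
  by_cases hm : Even m <;> by_cases hn : Even n <;> simp [Int.even_add, hm, hn]

@[simp] lemma e_zero : e 0 = 1 := rfl
@[simp] lemma e_one : e 1 = -1 := by decide
lemma e_mul_self (n : ℤ) : e n * e n = 1 := by unfold e; by_cases h : Even n <;> simp [h]
lemma e_neg (n : ℤ) : e (-n) = e n := by unfold e; simp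

/-! ### The concrete model of `Π(a,-1,-1,1)` -/

/-- Concrete model of `Π(a,-1,-1,1)` : a semidirect product `ℤ ⋉ ℤ²`. -/
@[ext] structure Ga (a : ℤ) where
  x : ℤ
  y : ℤ
  z : ℤ

namespace Ga
variable {a : ℤ}

instance : Mul (Ga a) :=
  ⟨fun p q => ⟨p.x + q.x, e q.x * p.y + q.y, e q.x * (a * q.x * p.y + p.z) + q.z⟩⟩
instance : One (Ga a) := ⟨⟨0, 0, 0⟩⟩
instance : Inv (Ga a) := ⟨fun p => ⟨-p.x, -(e p.x * p.y), e p.x * (a * p.x * p.y - p.z)⟩⟩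

lemma mul_def (p q : Ga a) :
    p * q = ⟨p.x + q.x, e q.x * p.y + q.y, e q.x * (a * q.x * p.y + p.z) + q.z⟩ := rfl
lemma one_def : (1 : Ga a) = ⟨0, 0, 0⟩ := rfl
lemma inv_def (p : Ga a) : p⁻¹ = ⟨-p.x, -(e p.x * p.y), e p.x * (a * p.x * p.y - p.z)⟩ := rfl

instance : Group (Ga a) where
  mul_assoc p q r := by
    ext <;> simp [mul_def, e_add] <;> ring
  one_mul p := by ext <;> simp [mul_def, one_def]
  mul_one p := by ext <;> simp [mul_def, one_def]
  inv_mul_cancel p := by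
    have h := e_mul_self p.x
    ext <;> simp [mul_def, one_def, inv_def] <;>
      [linear_combination (-p.y) * h; linear_combination (-p.z) * h]

@[simp] lemma zpow_x (n : ℤ) : (⟨1, 0, 0⟩ : Ga a) ^ n = ⟨n, 0, 0⟩ :=
  zpow_of_add_hom (fun m => (⟨m, 0, 0⟩ : Ga a)) (fun m n => by ext <;> simp [mul_def]) n

@[simp] lemma zpow_y (n : ℤ) : (⟨0, 1, 0⟩ : Ga a) ^ n = ⟨0, n, 0⟩ :=
  zpow_of_add_hom (fun m => (⟨0, m, 0⟩ : Ga a)) (fun m n => by ext <;> simp [mul_def]) n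

@[simp] lemma zpow_z (n : ℤ) : (⟨0, 0, 1⟩ : Ga a) ^ n = ⟨0, 0, n⟩ :=
  zpow_of_add_hom (fun m => (⟨0, 0, m⟩ : Ga a)) (fun m n => by ext <;> simp [mul_def]) n

end Ga

/-! ### The concrete model of `Π(2a,1,1,1)` -/

/-- Concrete (Heisenberg-like) model of `Π(2a,1,1,1)`. -/
@[ext] structure Na (a : ℤ) where
  x : ℤ
  y : ℤ
  z : ℤ

namespace Na
variable {a : ℤ}

instance : Mul (Na a) :=
  ⟨fun p q => ⟨p.x + q.x, p.y + q.y, p.z + q.z - 2 * a * q.x * p.y⟩⟩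
instance : One (Na a) := ⟨⟨0, 0, 0⟩⟩
instance : Inv (Na a) := ⟨fun p => ⟨-p.x, -p.y, -p.z - 2 * a * p.x * p.y⟩⟩

lemma mul_def (p q : Na a) :
    p * q = ⟨p.x + q.x, p.y + q.y, p.z + q.z - 2 * a * q.x * p.y⟩ := rfl
lemma one_def : (1 : Na a) = ⟨0, 0, 0⟩ := rfl
lemma inv_def (p : Na a) : p⁻¹ = ⟨-p.x, -p.y, -p.z - 2 * a * p.x * p.y⟩ := rfl

instance : Group (Na a) where
  mul_assoc p q r := by ext <;> simp [mul_def] <;> ring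
  one_mul p := by ext <;> simp [mul_def, one_def]
  mul_one p := by ext <;> simp [mul_def, one_def]
  inv_mul_cancel p := by ext <;> simp [mul_def, one_def, inv_def] <;> ring

@[simp] lemma zpow_x (n : ℤ) : (⟨1, 0, 0⟩ : Na a) ^ n = ⟨n, 0, 0⟩ :=
  zpow_of_add_hom (fun m => (⟨m, 0, 0⟩ : Na a)) (fun m n => by ext <;> simp [mul_def]) n

@[simp] lemma zpow_y (n : ℤ) : (⟨0, 1, 0⟩ : Na a) ^ n = ⟨0, n, 0⟩ :=
  zpow_of_add_hom (fun m => (⟨0, m, 0⟩ : Na a)) (fun m n => by ext <;> simp [mul_def]) n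

@[simp] lemma zpow_z (n : ℤ) : (⟨0, 0, 1⟩ : Na a) ^ n = ⟨0, 0, n⟩ :=
  zpow_of_add_hom (fun m => (⟨0, 0, m⟩ : Na a)) (fun m n => by ext <;> simp [mul_def]) n

/-- `Na` is nilpotent. -/
instance : Group.IsNilpotent (Na a) := by
  apply isNilpotent_of_ker_le_center
    (MonoidHom.mk' (fun p => (Multiplicative.ofAdd (p.x, p.y) : Multiplicative (ℤ × ℤ)))
      (fun p q => by simp [mul_def]; rfl))
  · intro p hp
    simp only [MonoidHom.mem_ker, MonoidHom.mk'_apply] at hp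
    have hx : p.x = 0 ∧ p.y = 0 := by
      have := congrArg Multiplicative.toAdd hp
      simpa [Prod.ext_iff] using this
    rw [Subgroup.mem_center_iff]
    intro q
    ext <;> simp [mul_def, hx.1, hx.2] <;> ring

end Na
variable {a ε ε₁ ε₂ : ℤ}

lemma pi_rel1 : (PresentedGroup.of 0 : PiGroup a ε ε₁ ε₂) * .of 1 * (.of 0)⁻¹ *
    (.of 1) ^ (-ε) * (.of 2) ^ (-a) = 1 := by
  have h := relator_eq_one (rels := PiRels a ε ε₁ ε₂) (Set.mem_insert _ _)
  simpa [PresentedGroup.of, map_mul, map_inv, map_zpow] using h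

lemma pi_rel2 : (PresentedGroup.of 0 : PiGroup a ε ε₁ ε₂) * .of 2 * (.of 0)⁻¹ *
    (.of 2) ^ (-ε₁) = 1 := by
  have h := relator_eq_one (rels := PiRels a ε ε₁ ε₂)
    (Set.mem_insert_of_mem _ (Set.mem_insert _ _))
  simpa [PresentedGroup.of, map_mul, map_inv, map_zpow] using h

lemma pi_rel3 : (PresentedGroup.of 1 : PiGroup a ε ε₁ ε₂) * .of 2 * (.of 1)⁻¹ *
    (.of 2) ^ (-ε₂) = 1 := by
  have h := relator_eq_one (rels := PiRels a ε ε₁ ε₂)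
    (Set.mem_insert_of_mem _ (Set.mem_insert_of_mem _ rfl))
  simpa [PresentedGroup.of, map_mul, map_inv, map_zpow] using h

/-! ### relations in `Π(a,-1,-1,1)` -/
section A
variable (a)
local notation "s1" => (PresentedGroup.of 0 : PiGroup a (-1) (-1) 1)
local notation "s2" => (PresentedGroup.of 1 : PiGroup a (-1) (-1) 1)
local notation "s3" => (PresentedGroup.of 2 : PiGroup a (-1) (-1) 1)

lemma Ra1 : s1 * s2 * (s1)⁻¹ = (s3) ^ a * (s2)⁻¹ := by
  have h := pi_rel1 (a := a) (ε := -1) (ε₁ := -1) (ε₂ := 1)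
  rw [neg_neg, zpow_one] at h
  calc s1 * s2 * (s1)⁻¹
      = s1 * s2 * (s1)⁻¹ * s2 * (s3) ^ (-a) * ((s3) ^ a * (s2)⁻¹) := by group
    _ = (s3) ^ a * (s2)⁻¹ := by rw [h, one_mul]

lemma Ra2 : s1 * s3 * (s1)⁻¹ = (s3)⁻¹ := by
  have h := pi_rel2 (a := a) (ε := -1) (ε₁ := -1) (ε₂ := 1)
  rw [neg_neg, zpow_one] at h
  calc s1 * s3 * (s1)⁻¹ = s1 * s3 * (s1)⁻¹ * s3 * (s3)⁻¹ := by group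
    _ = (s3)⁻¹ := by rw [h, one_mul]

lemma Ra3 : s2 * s3 = s3 * s2 := by
  have h := pi_rel3 (a := a) (ε := -1) (ε₁ := -1) (ε₂ := 1)
  rw [zpow_neg_one] at h
  have : s2 * s3 * (s2)⁻¹ = s3 := by
    calc s2 * s3 * (s2)⁻¹ = s2 * s3 * (s2)⁻¹ * (s3)⁻¹ * s3 := by group
      _ = s3 := by rw [h, one_mul]
  calc s2 * s3 = s2 * s3 * (s2)⁻¹ * s2 := by group
    _ = s3 * s2 := by rw [this]

lemma Ra2' (m : ℤ) : s1 * (s3) ^ m * (s1)⁻¹ = (s3) ^ (-m) := by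
  rw [← conj_zpow, Ra2 a]
  group

lemma Ra2'' (m : ℤ) : (s3) ^ m * s1 = s1 * (s3) ^ (-m) := by
  calc (s3) ^ m * s1 = s1 * ((s1)⁻¹ * (s3) ^ m * s1) := by group
    _ = s1 * (s3) ^ (-m) := by
        congr 1
        calc (s1)⁻¹ * (s3) ^ m * s1
            = (s1)⁻¹ * (s1 * (s3) ^ (-m) * (s1)⁻¹) * s1 := by rw [Ra2' a]; group
          _ = (s3) ^ (-m) := by group

lemma Ra3' (m : ℤ) : s2 * (s3) ^ m = (s3) ^ m * s2 :=
  (Commute.zpow_right (Ra3 a) m).eq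

lemma Ha1 : s1 * (s2)⁻¹ * (s1)⁻¹ = s2 * (s3) ^ (-a) := by
  calc s1 * (s2)⁻¹ * (s1)⁻¹ = (s1 * s2 * (s1)⁻¹)⁻¹ := by group
    _ = ((s3) ^ a * (s2)⁻¹)⁻¹ := by rw [Ra1 a]
    _ = s2 * (s3) ^ (-a) := by group

lemma Hb2 : (s1)⁻¹ * s2 * s1 = (s2)⁻¹ * (s3) ^ (-a) := by
  have key : s1 * ((s2)⁻¹ * (s3) ^ (-a)) * (s1)⁻¹ = s2 := by
    calc s1 * ((s2)⁻¹ * (s3) ^ (-a)) * (s1)⁻¹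
        = (s1 * (s2)⁻¹ * (s1)⁻¹) * (s1 * (s3) ^ (-a) * (s1)⁻¹) := by group
      _ = (s2 * (s3) ^ (-a)) * (s3) ^ (-(-a)) := by rw [Ha1 a, Ra2' a]
      _ = s2 := by group
  calc (s1)⁻¹ * s2 * s1
      = (s1)⁻¹ * (s1 * ((s2)⁻¹ * (s3) ^ (-a)) * (s1)⁻¹) * s1 := by rw [key]
    _ = (s2)⁻¹ * (s3) ^ (-a) := by group

end A

/-! ### relations in `Π(2a,1,1,1)` -/
section B
variable (a)
local notation "t1" => (PresentedGroup.of 0 : PiGroup (2*a) 1 1 1)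
local notation "t2" => (PresentedGroup.of 1 : PiGroup (2*a) 1 1 1)
local notation "t3" => (PresentedGroup.of 2 : PiGroup (2*a) 1 1 1)

lemma Rb1 : t1 * t2 * (t1)⁻¹ = (t3) ^ (2*a) * t2 := by
  have h := pi_rel1 (a := 2*a) (ε := 1) (ε₁ := 1) (ε₂ := 1)
  rw [zpow_neg_one] at h
  calc t1 * t2 * (t1)⁻¹
      = t1 * t2 * (t1)⁻¹ * (t2)⁻¹ * (t3) ^ (-(2*a)) * ((t3) ^ (2*a) * t2) := by group
    _ = (t3) ^ (2*a) * t2 := by rw [h, one_mul]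

lemma Rb2 : t1 * t3 * (t1)⁻¹ = t3 := by
  have h := pi_rel2 (a := 2*a) (ε := 1) (ε₁ := 1) (ε₂ := 1)
  rw [zpow_neg_one] at h
  calc t1 * t3 * (t1)⁻¹ = t1 * t3 * (t1)⁻¹ * (t3)⁻¹ * t3 := by group
    _ = t3 := by rw [h, one_mul]

lemma Rb3 : t2 * t3 * (t2)⁻¹ = t3 := by
  have h := pi_rel3 (a := 2*a) (ε := 1) (ε₁ := 1) (ε₂ := 1)
  rw [zpow_neg_one] at h
  calc t2 * t3 * (t2)⁻¹ = t2 * t3 * (t2)⁻¹ * (t3)⁻¹ * t3 := by group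
    _ = t3 := by rw [h, one_mul]

lemma t3_central (g : PiGroup (2*a) 1 1 1) : Commute (t3) g := by
  have hg : g ∈ Subgroup.centralizer {t3} := by
    refine PresentedGroup.generated_by _ _ (fun j => ?_) g
    rw [Subgroup.mem_centralizer_iff]
    rintro y rfl
    fin_cases j
    · calc t3 * t1 = t1 * ((t1)⁻¹ * t3 * t1) := by group
        _ = t1 * t3 := by
            congr 1
            calc (t1)⁻¹ * t3 * t1 = (t1)⁻¹ * (t1 * t3 * (t1)⁻¹) * t1 := by rw [Rb2 a]
              _ = t3 := by group
    · calc t3 * t2 = t2 * ((t2)⁻¹ * t3 * t2) := by group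
        _ = t2 * t3 := by
            congr 1
            calc (t2)⁻¹ * t3 * t2 = (t2)⁻¹ * (t2 * t3 * (t2)⁻¹) * t2 := by rw [Rb3 a]
              _ = t3 := by group
    · rfl
  exact Subgroup.mem_centralizer_iff.mp hg _ rfl

lemma t3_zpow_comm (m : ℤ) (g : PiGroup (2*a) 1 1 1) : g * (t3) ^ m = (t3) ^ m * g :=
  (((t3_central a g).zpow_left m).eq).symm

lemma conj_t2 (x : ℤ) : (t1) ^ x * t2 * (t1) ^ (-x) = (t3) ^ (2*a*x) * t2 := by
  induction x using Int.induction_on with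
  | zero => simp
  | succ k ih =>
      have : (t1) ^ ((k : ℤ) + 1) * t2 * (t1) ^ (-((k : ℤ) + 1))
          = t1 * ((t1) ^ (k : ℤ) * t2 * (t1) ^ (-(k : ℤ))) * (t1)⁻¹ := by
        rw [zpow_add_one]; group
      rw [this, ih]
      calc t1 * ((t3) ^ (2*a*(k:ℤ)) * t2) * (t1)⁻¹
          = (t1 * t3 * (t1)⁻¹) ^ (2*a*(k:ℤ)) * (t1 * t2 * (t1)⁻¹) := by
            rw [conj_zpow]; group
        _ = (t3) ^ (2*a*(k:ℤ)) * ((t3) ^ (2*a) * t2) := by rw [Rb2 a, Rb1 a]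
        _ = (t3) ^ (2*a*((k:ℤ)+1)) * t2 := by rw [← mul_assoc, ← zpow_add]; ring_nf
  | pred k ih =>
      have h1 : (t1)⁻¹ * t2 * t1 = (t3) ^ (-(2*a)) * t2 := by
        calc (t1)⁻¹ * t2 * t1
            = (t1)⁻¹ * ((t3) ^ (2*a))⁻¹ * ((t3) ^ (2*a) * t2) * t1 := by group
          _ = (t1)⁻¹ * ((t3) ^ (2*a))⁻¹ * (t1 * t2 * (t1)⁻¹) * t1 := by rw [Rb1 a]
          _ = ((t1)⁻¹ * ((t3) ^ (2*a))⁻¹ * t1) * t2 := by group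
          _ = (t3) ^ (-(2*a)) * t2 := by
              congr 1
              have := t3_zpow_comm a (-(2*a)) ((t1)⁻¹)
              calc (t1)⁻¹ * ((t3) ^ (2*a))⁻¹ * t1 = (t1)⁻¹ * (t3) ^ (-(2*a)) * t1 := by
                    rw [← zpow_neg]
                _ = (t3) ^ (-(2*a)) * ((t1)⁻¹ * t1) := by rw [this, mul_assoc]
                _ = (t3) ^ (-(2*a)) := by group
      have : (t1) ^ (-(k : ℤ) - 1) * t2 * (t1) ^ (-(-(k : ℤ) - 1))
          = (t1)⁻¹ * ((t1) ^ (-(k : ℤ)) * t2 * (t1) ^ (-(-(k : ℤ)))) * t1 := by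
        rw [zpow_sub_one]; group
      rw [this, ih]
      calc (t1)⁻¹ * ((t3) ^ (2*a*(-(k:ℤ))) * t2) * t1
          = (t3) ^ (2*a*(-(k:ℤ))) * ((t1)⁻¹ * t2 * t1) := by
            have hmove := t3_zpow_comm a (2*a*(-(k:ℤ))) ((t1)⁻¹)
            calc (t1)⁻¹ * ((t3) ^ (2*a*(-(k:ℤ))) * t2) * t1
                = ((t1)⁻¹ * (t3) ^ (2*a*(-(k:ℤ)))) * (t2 * t1) := by group
              _ = ((t3) ^ (2*a*(-(k:ℤ))) * (t1)⁻¹) * (t2 * t1) := by rw [hmove]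
              _ = (t3) ^ (2*a*(-(k:ℤ))) * ((t1)⁻¹ * t2 * t1) := by group
        _ = (t3) ^ (2*a*(-(k:ℤ))) * ((t3) ^ (-(2*a)) * t2) := by rw [h1]
        _ = (t3) ^ (2*a*(-(k:ℤ)-1)) * t2 := by rw [← mul_assoc, ← zpow_add]; ring_nf

lemma conj_t2_zpow (x y : ℤ) : (t1) ^ x * (t2) ^ y * (t1) ^ (-x) = (t3) ^ (2*a*x*y) * (t2) ^ y := by
  calc (t1) ^ x * (t2) ^ y * (t1) ^ (-x)
      = ((t1) ^ x * t2 * ((t1) ^ x)⁻¹) ^ y := by rw [conj_zpow]; group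
    _ = ((t3) ^ (2*a*x) * t2) ^ y := by rw [← zpow_neg, conj_t2 a]
    _ = ((t3) ^ (2*a*x)) ^ y * (t2) ^ y := by
        exact Commute.mul_zpow (Commute.zpow_left (t3_central a t2) _) y
    _ = (t3) ^ (2*a*x*y) * (t2) ^ y := by rw [← zpow_mul]

lemma swap_t2_t1 (x y : ℤ) :
    (t2) ^ y * (t1) ^ x = (t3) ^ (-(2*a*x*y)) * ((t1) ^ x * (t2) ^ y) := by
  have h := conj_t2_zpow a x y
  calc (t2) ^ y * (t1) ^ x
      = ((t3) ^ (2*a*x*y))⁻¹ * ((t3) ^ (2*a*x*y) * (t2) ^ y) * (t1) ^ x := by group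
    _ = ((t3) ^ (2*a*x*y))⁻¹ * ((t1) ^ x * (t2) ^ y * (t1) ^ (-x)) * (t1) ^ x := by rw [h]
    _ = (t3) ^ (-(2*a*x*y)) * ((t1) ^ x * (t2) ^ y) := by rw [← zpow_neg]; group

end B


/-! ### Homomorphisms -/
section Homs
variable (a : ℤ)
local notation "s1" => (PresentedGroup.of 0 : PiGroup a (-1) (-1) 1)
local notation "s2" => (PresentedGroup.of 1 : PiGroup a (-1) (-1) 1)
local notation "s3" => (PresentedGroup.of 2 : PiGroup a (-1) (-1) 1)
local notation "t1" => (PresentedGroup.of 0 : PiGroup (2*a) 1 1 1)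
local notation "t2" => (PresentedGroup.of 1 : PiGroup (2*a) 1 1 1)
local notation "t3" => (PresentedGroup.of 2 : PiGroup (2*a) 1 1 1)

@[simp] lemma e_neg_one : e (-1) = -1 := by decide

/-- The parity character of `Π(a,-1,-1,1)`. -/
def χ : PiGroup a (-1) (-1) 1 →* Multiplicative (ZMod 2) :=
  PresentedGroup.toGroup (f := ![Multiplicative.ofAdd 1, 1, 1]) (by
    intro r hr
    simp only [PiRels, Set.mem_insert_iff, Set.mem_singleton_iff] at hr
    rcases hr with rfl | rfl | rfl <;>
      simp [map_mul, map_inv, map_zpow])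

/-- The map `Π(a,-1,-1,1) → Ga`. -/
def θ : PiGroup a (-1) (-1) 1 →* Ga a :=
  PresentedGroup.toGroup (f := ![⟨1,0,0⟩, ⟨0,1,0⟩, ⟨0,0,1⟩]) (by
    intro r hr
    simp only [PiRels, Set.mem_insert_iff, Set.mem_singleton_iff] at hr
    rcases hr with rfl | rfl | rfl <;>
      · simp only [map_mul, map_inv, map_zpow, FreeGroup.lift_apply_of, Matrix.cons_val_zero,
          Matrix.cons_val_one, Matrix.head_cons, Matrix.cons_val_two, Matrix.tail_cons,
          neg_neg, zpow_one, Ga.zpow_x, Ga.zpow_y, Ga.zpow_z]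
        ext <;> simp [Ga.mul_def, Ga.inv_def, Ga.one_def] <;> ring)

/-- The map `Π(2a,1,1,1) → Na`. -/
def θN : PiGroup (2*a) 1 1 1 →* Na a :=
  PresentedGroup.toGroup (f := ![⟨1,0,0⟩, ⟨0,1,0⟩, ⟨0,0,1⟩]) (by
    intro r hr
    simp only [PiRels, Set.mem_insert_iff, Set.mem_singleton_iff] at hr
    rcases hr with rfl | rfl | rfl <;>
      · simp only [map_mul, map_inv, map_zpow, FreeGroup.lift_apply_of, Matrix.cons_val_zero,
          Matrix.cons_val_one, Matrix.head_cons, Matrix.cons_val_two, Matrix.tail_cons,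
          neg_neg, zpow_one, Na.zpow_x, Na.zpow_y, Na.zpow_z]
        ext <;> simp [Na.mul_def, Na.inv_def, Na.one_def] <;> ring)

/-- The map `Π(2a,1,1,1) → Π(a,-1,-1,1)`, `t₁ ↦ s₁², t₂ ↦ s₂, t₃ ↦ s₃⁻¹`. -/
def ψ : PiGroup (2*a) 1 1 1 →* PiGroup a (-1) (-1) 1 :=
  PresentedGroup.toGroup (f := ![s1 * s1, s2, (s3)⁻¹]) (by
    intro r hr
    simp only [PiRels, Set.mem_insert_iff, Set.mem_singleton_iff] at hr
    rcases hr with rfl | rfl | rfl <;>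
      simp only [map_mul, map_inv, map_zpow, FreeGroup.lift_apply_of, Matrix.cons_val_zero,
        Matrix.cons_val_one, Matrix.head_cons, Matrix.cons_val_two, Matrix.tail_cons,
        neg_neg, zpow_one, zpow_neg_one]
    · -- s1² s2 s1⁻² s2⁻¹ (s3⁻¹)^(-2a) = 1
      have key : s1 * s1 * s2 * (s1 * s1)⁻¹ = s2 * (s3) ^ (-(2*a)) := by
        calc s1 * s1 * s2 * (s1 * s1)⁻¹
            = s1 * (s1 * s2 * (s1)⁻¹) * (s1)⁻¹ := by group
          _ = s1 * ((s3) ^ a * (s2)⁻¹) * (s1)⁻¹ := by rw [Ra1 a]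
          _ = (s1 * (s3) ^ a * (s1)⁻¹) * (s1 * (s2)⁻¹ * (s1)⁻¹) := by group
          _ = (s3) ^ (-a) * (s2 * (s3) ^ (-a)) := by rw [Ra2' a, Ha1 a]
          _ = s2 * (s3) ^ (-(2*a)) := by
              calc (s3) ^ (-a) * (s2 * (s3) ^ (-a))
                  = ((s3) ^ (-a) * s2) * (s3) ^ (-a) := by group
                _ = (s2 * (s3) ^ (-a)) * (s3) ^ (-a) := by rw [← Ra3' a]
                _ = s2 * (s3) ^ (-a + -a) := by rw [mul_assoc, ← zpow_add]
                _ = s2 * (s3) ^ (-(2*a)) := by ring_nf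
      calc s1 * s1 * s2 * (s1 * s1)⁻¹ * (s2)⁻¹ * ((s3)⁻¹) ^ (-(2*a))
          = s2 * (s3) ^ (-(2*a)) * (s2)⁻¹ * ((s3)⁻¹) ^ (-(2*a)) := by rw [key]
        _ = s2 * (s3) ^ (-(2*a)) * (s2)⁻¹ * (s3) ^ (2*a) := by rw [inv_zpow, ← zpow_neg, neg_neg]
        _ = (s2 * (s3) ^ (-(2*a)) * (s2)⁻¹ * (s3) ^ (-(-(2*a)))) := by rw [neg_neg]
        _ = s2 * ((s3) ^ (-(2*a)) * (s2)⁻¹) * (s3) ^ (2*a) := by rw [neg_neg]; group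
        _ = s2 * ((s2)⁻¹ * (s3) ^ (-(2*a))) * (s3) ^ (2*a) := by
            congr 2
            have h := Ra3' a (-(2*a))
            calc (s3) ^ (-(2*a)) * (s2)⁻¹ = (s2)⁻¹ * ((s2) * (s3) ^ (-(2*a)) * (s2)⁻¹) := by group
              _ = (s2)⁻¹ * ((s3) ^ (-(2*a)) * (s2) * (s2)⁻¹) := by rw [h]
              _ = (s2)⁻¹ * (s3) ^ (-(2*a)) := by group
        _ = 1 := by group
    · -- s1² s3⁻¹ s1⁻² s3 = 1  (relator: s1² * s3⁻¹ * (s1²)⁻¹ * ((s3)⁻¹)^(-1) )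
      have key : s1 * s1 * (s3) ^ (-1 : ℤ) * (s1 * s1)⁻¹ = (s3) ^ (-1 : ℤ) := by
        calc s1 * s1 * (s3) ^ (-1:ℤ) * (s1 * s1)⁻¹
            = s1 * (s1 * (s3) ^ (-1:ℤ) * (s1)⁻¹) * (s1)⁻¹ := by group
          _ = s1 * (s3) ^ (1:ℤ) * (s1)⁻¹ := by rw [Ra2' a, neg_neg]
          _ = (s3) ^ (-1:ℤ) := by rw [Ra2' a]
      calc s1 * s1 * (s3)⁻¹ * (s1 * s1)⁻¹ * (s3)⁻¹⁻¹
          = s1 * s1 * (s3) ^ (-1:ℤ) * (s1 * s1)⁻¹ * s3 := by group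
        _ = (s3) ^ (-1:ℤ) * s3 := by rw [key]
        _ = 1 := by group
    · -- s2 s3⁻¹ s2⁻¹ s3 = 1
      have h := Ra3' a (-1)
      calc s2 * (s3)⁻¹ * (s2)⁻¹ * (s3)⁻¹⁻¹
          = (s2 * (s3) ^ (-1:ℤ)) * (s2)⁻¹ * s3 := by group
        _ = ((s3) ^ (-1:ℤ) * s2) * (s2)⁻¹ * s3 := by rw [h]
        _ = 1 := by group)


/-- Normal-form multiplication in `Π(2a,1,1,1)`. -/
lemma sigma_mul (x y z x' y' z' : ℤ) :
    ((t1) ^ x * (t2) ^ y * (t3) ^ z) * ((t1) ^ x' * (t2) ^ y' * (t3) ^ z') =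
      (t1) ^ (x + x') * (t2) ^ (y + y') * (t3) ^ (z + z' - 2*a*x'*y) := by
  have hz : ∀ (m : ℤ) (g : PiGroup (2*a) 1 1 1), g * (t3) ^ m = (t3) ^ m * g :=
    fun m g => t3_zpow_comm a m g
  calc ((t1) ^ x * (t2) ^ y * (t3) ^ z) * ((t1) ^ x' * (t2) ^ y' * (t3) ^ z')
      = (t1) ^ x * (t2) ^ y * ((t3) ^ z * (t1) ^ x') * (t2) ^ y' * (t3) ^ z' := by group
    _ = (t1) ^ x * (t2) ^ y * ((t1) ^ x' * (t3) ^ z) * (t2) ^ y' * (t3) ^ z' := by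
        rw [← hz z ((t1) ^ x')]
    _ = (t1) ^ x * (t2) ^ y * (t1) ^ x' * ((t3) ^ z * (t2) ^ y') * (t3) ^ z' := by group
    _ = (t1) ^ x * (t2) ^ y * (t1) ^ x' * ((t2) ^ y' * (t3) ^ z) * (t3) ^ z' := by
        rw [← hz z ((t2) ^ y')]
    _ = (t1) ^ x * ((t2) ^ y * (t1) ^ x') * ((t2) ^ y' * ((t3) ^ z * (t3) ^ z')) := by group
    _ = (t1) ^ x * ((t3) ^ (-(2*a*x'*y)) * ((t1) ^ x' * (t2) ^ y)) *
          ((t2) ^ y' * (t3) ^ (z + z')) := by rw [swap_t2_t1 a, zpow_add]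
    _ = ((t1) ^ x * (t3) ^ (-(2*a*x'*y))) * ((t1) ^ x' * ((t2) ^ y * (t2) ^ y') *
          (t3) ^ (z + z')) := by group
    _ = ((t3) ^ (-(2*a*x'*y)) * (t1) ^ x) * ((t1) ^ x' * ((t2) ^ y * (t2) ^ y') *
          (t3) ^ (z + z')) := by rw [hz]
    _ = (t3) ^ (-(2*a*x'*y)) * (((t1) ^ x * (t1) ^ x') * (t2) ^ (y + y')) *
          (t3) ^ (z + z') := by rw [zpow_add]; group
    _ = (((t1) ^ x * (t1) ^ x') * (t2) ^ (y + y')) * ((t3) ^ (-(2*a*x'*y)) *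
          (t3) ^ (z + z')) := by
        rw [← hz (-(2*a*x'*y)) ((t1) ^ x * (t1) ^ x' * (t2) ^ (y + y'))]; group
    _ = (t1) ^ (x + x') * (t2) ^ (y + y') * (t3) ^ (-(2*a*x'*y) + (z + z')) := by
        rw [← zpow_add, ← zpow_add]
    _ = (t1) ^ (x + x') * (t2) ^ (y + y') * (t3) ^ (z + z' - 2*a*x'*y) := by ring_nf

/-- The inverse map `Na → Π(2a,1,1,1)`. -/
def σN : Na a →* PiGroup (2*a) 1 1 1 :=
  MonoidHom.mk' (fun p => (t1) ^ p.x * (t2) ^ p.y * (t3) ^ p.z) (by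
    intro p q
    rw [Na.mul_def]
    exact (sigma_mul a p.x p.y p.z q.x q.y q.z).symm)

lemma theta_sigma (p : Na a) : θN a (σN a p) = p := by
  have h0 : θN a (t1) = ⟨1,0,0⟩ := PresentedGroup.toGroup.of _
  have h1 : θN a (t2) = ⟨0,1,0⟩ := PresentedGroup.toGroup.of _
  have h2 : θN a (t3) = ⟨0,0,1⟩ := PresentedGroup.toGroup.of _
  show θN a ((t1) ^ p.x * (t2) ^ p.y * (t3) ^ p.z) = p
  rw [map_mul, map_mul, map_zpow, map_zpow, map_zpow, h0, h1, h2,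
    Na.zpow_x, Na.zpow_y, Na.zpow_z]
  ext <;> simp [Na.mul_def]

lemma σN_apply (p : Na a) :
    σN a p = (t1) ^ p.x * (t2) ^ p.y * (t3) ^ p.z := rfl

lemma sigma_theta : (σN a).comp (θN a) = MonoidHom.id _ := by
  apply PresentedGroup.ext
  intro i
  simp only [MonoidHom.comp_apply, MonoidHom.id_apply]
  fin_cases i <;>
    · rw [show (θN a) (PresentedGroup.of _) = _ from PresentedGroup.toGroup.of _, σN_apply]
      simp

lemma sigma_surj : Function.Surjective (σN a) := fun g => ⟨θN a g, by
  have := sigma_theta a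
  calc σN a (θN a g) = ((σN a).comp (θN a)) g := rfl
    _ = g := by rw [this]; rfl⟩


/-! ### The embedding `ι : Na → Ga` and injectivity of `ψ` -/

lemma e_two_mul (n : ℤ) : e (2*n) = 1 := if_pos ⟨n, two_mul n⟩

def ι : Na a →* Ga a :=
  MonoidHom.mk' (fun p => ⟨2*p.x, p.y, -p.z⟩) (by
    intro p q
    ext <;> simp [Na.mul_def, Ga.mul_def, e_two_mul] <;> ring)

lemma ι_apply (p : Na a) : ι a p = ⟨2*p.x, p.y, -p.z⟩ := rfl

lemma ι_inj : Function.Injective (ι a) := by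
  intro p q h
  rw [ι_apply, ι_apply, Ga.mk.injEq] at h
  ext <;> omega

lemma ψ_of0 : ψ a (PresentedGroup.of 0) = (s1) * (s1) := PresentedGroup.toGroup.of _
lemma ψ_of1 : ψ a (PresentedGroup.of 1) = (s2) := PresentedGroup.toGroup.of _
lemma ψ_of2 : ψ a (PresentedGroup.of 2) = (s3)⁻¹ := PresentedGroup.toGroup.of _
lemma θ_of0 : θ a (s1) = ⟨1,0,0⟩ := PresentedGroup.toGroup.of _
lemma θ_of1 : θ a (s2) = ⟨0,1,0⟩ := PresentedGroup.toGroup.of _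
lemma θ_of2 : θ a (s3) = ⟨0,0,1⟩ := PresentedGroup.toGroup.of _
lemma θN_of0 : θN a (t1) = ⟨1,0,0⟩ := PresentedGroup.toGroup.of _
lemma θN_of1 : θN a (t2) = ⟨0,1,0⟩ := PresentedGroup.toGroup.of _
lemma θN_of2 : θN a (t3) = ⟨0,0,1⟩ := PresentedGroup.toGroup.of _

lemma theta_psi : (θ a).comp (ψ a) = (ι a).comp (θN a) := by
  apply PresentedGroup.ext
  intro i
  fin_cases i
  · show (θ a) ((ψ a) (PresentedGroup.of 0)) = (ι a) ((θN a) (PresentedGroup.of 0))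
    rw [ψ_of0, θN_of0, map_mul, θ_of0, ι_apply]
    ext <;> simp [Ga.mul_def]
  · show (θ a) ((ψ a) (PresentedGroup.of 1)) = (ι a) ((θN a) (PresentedGroup.of 1))
    rw [ψ_of1, θN_of1, θ_of1, ι_apply]
    ext <;> simp
  · show (θ a) ((ψ a) (PresentedGroup.of 2)) = (ι a) ((θN a) (PresentedGroup.of 2))
    rw [ψ_of2, θN_of2, map_inv, θ_of2, ι_apply]
    ext <;> simp [Ga.inv_def]

lemma θN_inj : Function.Injective (θN a) := by
  intro g g' h
  have hs := sigma_theta a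
  calc g = ((σN a).comp (θN a)) g := by rw [hs]; rfl
    _ = ((σN a).comp (θN a)) g' := by simp only [MonoidHom.comp_apply, h]
    _ = g' := by rw [hs]; rfl

lemma ψ_inj : Function.Injective (ψ a) := by
  intro g g' h
  apply θN_inj a
  apply ι_inj a
  calc ι a (θN a g) = ((ι a).comp (θN a)) g := rfl
    _ = ((θ a).comp (ψ a)) g := by rw [theta_psi]
    _ = θ a (ψ a g') := by simp only [MonoidHom.comp_apply, h]
    _ = ((ι a).comp (θN a)) g' := by rw [← MonoidHom.comp_apply, theta_psi]
    _ = ι a (θN a g') := rfl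

lemma ψ_range : (ψ a).range = Hsub a := by
  rw [MonoidHom.range_eq_map, ← PresentedGroup.closure_range_of (PiRels (2*a) 1 1 1),
    MonoidHom.map_closure, Hsub]
  apply le_antisymm
  · rw [Subgroup.closure_le]
    rintro x ⟨y, ⟨i, rfl⟩, rfl⟩
    fin_cases i
    · show ψ a (PresentedGroup.of 0) ∈ _
      rw [ψ_of0]
      exact Subgroup.subset_closure (by left; rw [pow_two])
    · show ψ a (PresentedGroup.of 1) ∈ _
      rw [ψ_of1]
      exact Subgroup.subset_closure (by right; left; rfl)
    · show ψ a (PresentedGroup.of 2) ∈ _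
      rw [ψ_of2]
      exact Subgroup.inv_mem _ (Subgroup.subset_closure (by right; right; rfl))
  · rw [Subgroup.closure_le]
    intro x hx
    simp only [Set.mem_insert_iff, Set.mem_singleton_iff] at hx
    have h0 : (s1) * (s1) ∈ (⇑(ψ a)) '' Set.range (PresentedGroup.of) :=
      ⟨PresentedGroup.of 0, ⟨0, rfl⟩, ψ_of0 a⟩
    have h1 : (s2) ∈ (⇑(ψ a)) '' Set.range (PresentedGroup.of) :=
      ⟨PresentedGroup.of 1, ⟨1, rfl⟩, ψ_of1 a⟩
    have h2 : (s3)⁻¹ ∈ (⇑(ψ a)) '' Set.range (PresentedGroup.of) :=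
      ⟨PresentedGroup.of 2, ⟨2, rfl⟩, ψ_of2 a⟩
    rcases hx with rfl | rfl | rfl
    · rw [pow_two]; exact Subgroup.subset_closure h0
    · exact Subgroup.subset_closure h1
    · rw [show (s3) = ((s3)⁻¹)⁻¹ from by group]
      exact Subgroup.inv_mem _ (Subgroup.subset_closure h2)

/-! ### The character and the index computation -/

lemma χ_s1 : χ a (s1) = Multiplicative.ofAdd 1 := PresentedGroup.toGroup.of _

lemma Hsub_le_ker : Hsub a ≤ (χ a).ker := by
  rw [Hsub, Subgroup.closure_le]
  intro x hx
  simp only [Set.mem_insert_iff, Set.mem_singleton_iff] at hx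
  rcases hx with rfl | rfl | rfl <;> rw [SetLike.mem_coe, MonoidHom.mem_ker]
  · rw [map_pow, χ_s1]; decide
  · exact PresentedGroup.toGroup.of _
  · exact PresentedGroup.toGroup.of _

lemma stab1 : ∀ g ∈ Hsub a, (s1) * g * (s1)⁻¹ ∈ Hsub a := by
  have key : Hsub a ≤ Subgroup.comap (MulAut.conj (s1)).toMonoidHom (Hsub a) := by
    rw [Hsub, Subgroup.closure_le]
    intro x hx
    simp only [Set.mem_insert_iff, Set.mem_singleton_iff] at hx
    rcases hx with rfl | rfl | rfl <;>
      simp only [SetLike.mem_coe, Subgroup.mem_comap, MulEquiv.coe_toMonoidHom,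
        MulAut.conj_apply]
    · rw [show (s1) * (s1) ^ 2 * (s1)⁻¹ = (s1) ^ 2 from by group]
      exact Subgroup.subset_closure (by left; rfl)
    · rw [Ra1 a]
      exact Subgroup.mul_mem _
        (Subgroup.zpow_mem _ (Subgroup.subset_closure (by right; right; rfl)) a)
        (Subgroup.inv_mem _ (Subgroup.subset_closure (by right; left; rfl)))
    · rw [Ra2 a]
      exact Subgroup.inv_mem _ (Subgroup.subset_closure (by right; right; rfl))
  intro g hg
  exact Subgroup.mem_comap.mp (key hg)

lemma inv_conj_s3 (m : ℤ) : (s1)⁻¹ * (s3) ^ m * (s1) = (s3) ^ (-m) := by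
  calc (s1)⁻¹ * (s3) ^ m * (s1) = (s1)⁻¹ * ((s3) ^ m * (s1)) := by group
    _ = (s1)⁻¹ * ((s1) * (s3) ^ (-m)) := by rw [Ra2'' a]
    _ = (s3) ^ (-m) := by group

lemma stab1' : ∀ g ∈ Hsub a, (s1)⁻¹ * g * (s1) ∈ Hsub a := by
  have key : Hsub a ≤ Subgroup.comap (MulAut.conj ((s1)⁻¹)).toMonoidHom (Hsub a) := by
    rw [Hsub, Subgroup.closure_le]
    intro x hx
    simp only [Set.mem_insert_iff, Set.mem_singleton_iff] at hx
    rcases hx with rfl | rfl | rfl <;>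
      simp only [SetLike.mem_coe, Subgroup.mem_comap, MulEquiv.coe_toMonoidHom,
        MulAut.conj_apply, inv_inv]
    · rw [show (s1)⁻¹ * (s1) ^ 2 * (s1) = (s1) ^ 2 from by group]
      exact Subgroup.subset_closure (by left; rfl)
    · rw [Hb2 a]
      exact Subgroup.mul_mem _
        (Subgroup.inv_mem _ (Subgroup.subset_closure (by right; left; rfl)))
        (Subgroup.zpow_mem _ (Subgroup.subset_closure (by right; right; rfl)) (-a))
    · rw [show (s1)⁻¹ * (s3) * (s1) = (s1)⁻¹ * (s3) ^ (1:ℤ) * (s1) from by group,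
        inv_conj_s3 a]
      exact Subgroup.zpow_mem _ (Subgroup.subset_closure (by right; right; rfl)) (-1)
  intro g hg
  exact Subgroup.mem_comap.mp (key hg)

/-- The union `H ∪ s₁H` is a subgroup (in fact everything). -/
def Scover : Subgroup (PiGroup a (-1) (-1) 1) where
  carrier := {g | g ∈ Hsub a ∨ (s1)⁻¹ * g ∈ Hsub a}
  one_mem' := Or.inl (one_mem _)
  mul_mem' := by
    rintro g g' (hg | hg) (hg' | hg')
    · exact Or.inl (mul_mem hg hg')
    · refine Or.inr ?_
      rw [show (s1)⁻¹ * (g * g') = ((s1)⁻¹ * g * (s1)) * ((s1)⁻¹ * g') from by group]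
      exact mul_mem (stab1' a g hg) hg'
    · refine Or.inr ?_
      rw [show (s1)⁻¹ * (g * g') = ((s1)⁻¹ * g) * g' from by group]
      exact mul_mem hg hg'
    · refine Or.inl ?_
      rw [show g * g' = ((s1) * ((s1)⁻¹ * g) * (s1)⁻¹) * (s1) ^ 2 * ((s1)⁻¹ * g')
        from by group]
      exact mul_mem (mul_mem (stab1 a _ hg)
        (Subgroup.subset_closure (by left; rfl))) hg'
  inv_mem' := by
    rintro g (hg | hg)
    · exact Or.inl (inv_mem hg)
    · refine Or.inr ?_
      rw [show (s1)⁻¹ * g⁻¹ = ((s1)⁻¹ * ((s1)⁻¹ * g)⁻¹ * (s1)) * ((s1) ^ 2)⁻¹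
        from by group]
      exact mul_mem (stab1' a _ (inv_mem hg))
        (Subgroup.inv_mem _ (Subgroup.subset_closure (by left; rfl)))

lemma cover (g : PiGroup a (-1) (-1) 1) : g ∈ Hsub a ∨ (s1)⁻¹ * g ∈ Hsub a := by
  refine PresentedGroup.generated_by _ (Scover a) (fun j => ?_) g
  fin_cases j
  · refine Or.inr ?_
    show (s1)⁻¹ * (s1) ∈ Hsub a
    rw [inv_mul_cancel]
    exact one_mem _
  · exact Or.inl (Subgroup.subset_closure (by right; left; rfl))
  · exact Or.inl (Subgroup.subset_closure (by right; right; rfl))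

lemma hker : Hsub a = (χ a).ker := by
  refine le_antisymm (Hsub_le_ker a) ?_
  intro g hg
  rcases cover a g with h | h
  · exact h
  · exfalso
    have h1 : χ a ((s1)⁻¹ * g) = 1 := Hsub_le_ker a h
    rw [map_mul, map_inv, χ_s1, MonoidHom.mem_ker.mp hg, mul_one] at h1
    exact absurd h1 (by decide)

lemma χ_surj : Function.Surjective (χ a) := by
  intro x
  have : x = 1 ∨ x = Multiplicative.ofAdd 1 := by revert x; decide
  rcases this with rfl | rfl
  · exact ⟨1, map_one _⟩
  · exact ⟨s1, χ_s1 a⟩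

lemma index_eq : (Hsub a).index = 2 := by
  rw [hker, Subgroup.index_ker, MonoidHom.range_eq_top_of_surjective _ (χ_surj a),
    Subgroup.card_top, Nat.card_eq_fintype_card]
  rfl

lemma normal : (Hsub a).Normal := by
  rw [hker]
  infer_instance

end Homs

end PiVN

/-- In `Π(a, −1, −1, 1)`, the subgroup `H = ⟨s₁², s₂, s₃⟩` is normal of index 2 and is
isomorphic to `Π(2a, 1, 1, 1)`; in particular `Π(a, −1, −1, 1)` contains a nilpotent
subgroup of index 2, hence is virtually nilpotent. -/
theorem PiGroup_neg_virtually_nilpotent (a : ℤ) :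
    (Hsub a).Normal ∧ (Hsub a).index = 2 ∧
    Nonempty (↥(Hsub a) ≃* PiGroup (2 * a) 1 1 1) ∧
    ∃ K : Subgroup (PiGroup a (-1) (-1) 1), Group.IsNilpotent ↥K ∧ K.index = 2 := by
  haveI hnil2a : Group.IsNilpotent (PiGroup (2*a) 1 1 1) :=
    nilpotent_of_surjective (PiVN.σN a) (PiVN.sigma_surj a)
  have equiv : PiGroup (2*a) 1 1 1 ≃* ↥(Hsub a) :=
    (MonoidHom.ofInjective (PiVN.ψ_inj a)).trans (MulEquiv.subgroupCongr (PiVN.ψ_range a))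
  exact ⟨PiVN.normal a, PiVN.index_eq a, ⟨equiv.symm⟩,
    ⟨Hsub a, nilpotent_of_mulEquiv equiv, PiVN.index_eq a⟩⟩
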